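/- Let J^{(1)}, ..., J^{(L)} be square matrices such that ‖J^{(ℓ)}‖_2 ≥ M > 0 for all ℓ, and the alignment between adjacent matrices satisfies Align(J^{(ℓ+1)}, J^{(ℓ)}) ≥ a > 0 for all ℓ (where Align(A,B) = |v_{A,1}ᵀ u_{B,1}| with v_{A,1} a top right singular vector of A and u_{B,1} a top left singular vector of B). Then ‖J^{(L)} J^{(L-1)} ⋯ J^{(1)}‖_2 ≥ (aM)^L / a. -/

import Mathlib

noncomputable def frobNorm {m n : Type*} [Fintype m] [Fintype n] (W : Matrix m n ℝ) : ℝ :=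
  Real.sqrt (∑ i, ∑ j, (W i j)^2)

noncomputable def opNorm {m n : Type*} [Fintype m] [Fintype n] [DecidableEq n] (W : Matrix m n ℝ) : ℝ :=
  ‖(Matrix.toEuclideanLin W).toContinuousLinearMap‖

noncomputable def srank {m n : Type*} [Fintype m] [Fintype n] [DecidableEq n] (W : Matrix m n ℝ) : ℝ :=
  (frobNorm W)^2 / (opNorm W)^2

noncomputable def vnorm {n : Type*} [Fintype n] (x : n → ℝ) : ℝ := Real.sqrt (∑ i, x i ^2)

/-- Product of the first k matrices: chainProd J k = J (k-1) * ⋯ * J 0. -/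
noncomputable def chainProd {n : ℕ} (J : ℕ → Matrix (Fin n) (Fin n) ℝ) : ℕ → Matrix (Fin n) (Fin n) ℝ
  | 0 => 1
  | (k+1) => J k * chainProd J k

/-- Alignment of A and B is at least a: there is a top right singular vector of A and a
top left singular vector of B whose absolute inner product is at least a. -/
def AlignGE {n : ℕ} (A B : Matrix (Fin n) (Fin n) ℝ) (a : ℝ) : Prop :=
  ∃ vA uB vB : Fin n → ℝ,
    vnorm vA = 1 ∧ vnorm uB = 1 ∧ vnorm vB = 1 ∧
    vnorm (A.mulVec vA) = opNorm A ∧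
    B.mulVec vB = opNorm B • uB ∧
    a ≤ |∑ i, vA i * uB i|

open ContinuousLinearMap RealInnerProductSpace

private lemma norm_achiever_lower {E : Type*} [NormedAddCommGroup E] [InnerProductSpace ℝ E]
    [CompleteSpace E] (f : E →L[ℝ] E) (v : E) (hv : ‖v‖ = 1) (hfv : ‖f v‖ = ‖f‖) (x : E) :
    ‖f‖ * |⟪v, x⟫| ≤ ‖f x‖ := by
  set g : E →L[ℝ] E := (adjoint f) ∘L f with hg
  have hgv : g v = (‖f‖^2 : ℝ) • v := by
    set w : E := g v - (‖f‖^2 : ℝ) • v with hw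
    have hvg : ⟪v, g v⟫ = ‖f‖^2 := by
      simp [hg, adjoint_inner_right, real_inner_self_eq_norm_sq, hfv]
    have hvw : ⟪v, w⟫ = 0 := by
      simp [hw, inner_sub_right, inner_smul_right, hvg, real_inner_self_eq_norm_sq, hv]
    have hdecomp : g v = (‖f‖^2 : ℝ) • v + w := by simp [hw]
    have hnorm2 : ‖g v‖^2 = ‖f‖^4 + ‖w‖^2 := by
      rw [hdecomp, @norm_add_sq_real, inner_smul_left, hvw]
      simp [norm_smul, hv]
      ring
    have hle : ‖g v‖ ≤ ‖f‖^2 := by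
      calc ‖g v‖ ≤ ‖g‖ * ‖v‖ := g.le_opNorm v
        _ = ‖f‖^2 := by rw [hv, hg, norm_adjoint_comp_self]; ring
    have hsq : ‖w‖^2 ≤ 0 := by nlinarith [norm_nonneg (g v), norm_nonneg w]
    have hw0 : w = 0 := by
      have hn : ‖w‖ = 0 := by nlinarith [norm_nonneg w]
      exact norm_eq_zero.mp hn
    rw [hdecomp, hw0, add_zero]
  have key : ‖f‖^2 * |⟪v, x⟫| ≤ ‖f‖ * ‖f x‖ := by
    have h1 : ⟪f v, f x⟫ = ‖f‖^2 * ⟪v, x⟫ := by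
      have h2 : ⟪f v, f x⟫ = ⟪g v, x⟫ := by simp [hg, ContinuousLinearMap.adjoint_inner_left]
      rw [h2, hgv, real_inner_smul_left]
    calc ‖f‖^2 * |⟪v, x⟫| = |⟪f v, f x⟫| := by
          rw [h1, abs_mul, abs_of_nonneg (sq_nonneg ‖f‖)]
      _ ≤ ‖f v‖ * ‖f x‖ := abs_real_inner_le_norm _ _
      _ = ‖f‖ * ‖f x‖ := by rw [hfv]
  rcases eq_or_lt_of_le (norm_nonneg f) with h0 | h0
  · simp [← h0]
  · nlinarith [abs_nonneg ⟪v, x⟫]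

/-- view a plain vector as euclidean vector -/
noncomputable def toE {n : ℕ} (x : Fin n → ℝ) : EuclideanSpace ℝ (Fin n) :=
  (WithLp.equiv 2 (Fin n → ℝ)).symm x

lemma vnorm_toE {n : ℕ} (x : Fin n → ℝ) : ‖toE x‖ = vnorm x := by
  simp [toE, EuclideanSpace.norm_eq, vnorm, Real.norm_eq_abs, sq_abs]

lemma inner_toE {n : ℕ} (x y : Fin n → ℝ) : ⟪toE x, toE y⟫ = ∑ i, x i * y i := by
  simp [toE, PiLp.inner_apply, RCLike.inner_apply, mul_comm]

lemma clm_apply_toE {n : ℕ} (W : Matrix (Fin n) (Fin n) ℝ) (x : Fin n → ℝ) :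
    (Matrix.toEuclideanLin W).toContinuousLinearMap (toE x) = toE (W.mulVec x) := by
  rfl

lemma opNorm_mul_ge {n : ℕ} (A B : Matrix (Fin n) (Fin n) ℝ) (a : ℝ) (ha : 0 ≤ a)
    (h : AlignGE A B a) : a * (opNorm A * opNorm B) ≤ opNorm (A * B) := by
  obtain ⟨vA, uB, vB, hvA, huB, hvB, htop, hBvB, hal⟩ := h
  set f := (Matrix.toEuclideanLin A).toContinuousLinearMap with hf
  have hv1 : ‖toE vA‖ = 1 := by rw [vnorm_toE, hvA]
  have hfv : ‖f (toE vA)‖ = ‖f‖ := by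
    rw [hf, clm_apply_toE, vnorm_toE, htop]; rfl
  have hkey := norm_achiever_lower f (toE vA) hv1 hfv (toE uB)
  rw [inner_toE, clm_apply_toE, vnorm_toE] at hkey
  -- hkey : ‖f‖ * |∑ vA i * uB i| ≤ vnorm (A.mulVec uB)
  have hA : opNorm A * a ≤ vnorm (A.mulVec uB) := by
    refine le_trans ?_ hkey
    exact mul_le_mul_of_nonneg_left hal (norm_nonneg f)
  set F := (Matrix.toEuclideanLin (A * B)).toContinuousLinearMap with hF
  have hub : ‖F (toE vB)‖ ≤ opNorm (A * B) := by
    calc ‖F (toE vB)‖ ≤ ‖F‖ * ‖toE vB‖ := F.le_opNorm _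
      _ = opNorm (A * B) := by rw [vnorm_toE, hvB, mul_one]; rfl
  have hFval : ‖F (toE vB)‖ = opNorm B * vnorm (A.mulVec uB) := by
    rw [hF, clm_apply_toE]
    have : (A * B).mulVec vB = opNorm B • (A.mulVec uB) := by
      rw [← Matrix.mulVec_mulVec, hBvB, Matrix.mulVec_smul]
    rw [this, vnorm_toE]
    have : toE (opNorm B • A.mulVec uB) = (opNorm B) • toE (A.mulVec uB) := rfl
    rw [show vnorm (opNorm B • A.mulVec uB) = ‖toE (opNorm B • A.mulVec uB)‖ from (vnorm_toE _).symm,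
      this, norm_smul, vnorm_toE, Real.norm_eq_abs]
    have habs : |opNorm B| = opNorm B := abs_of_nonneg (norm_nonneg _)
    rw [habs]
  have hBnn : (0:ℝ) ≤ opNorm B := norm_nonneg _
  calc a * (opNorm A * opNorm B) = opNorm B * (opNorm A * a) := by ring
    _ ≤ opNorm B * vnorm (A.mulVec uB) := mul_le_mul_of_nonneg_left hA hBnn
    _ = ‖F (toE vB)‖ := hFval.symm
    _ ≤ opNorm (A * B) := hub

/-- Jacobian product norm lower bound: ‖J^{(L)} ⋯ J^{(1)}‖₂ ≥ (aM)^L / a. -/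
theorem jacobian_product_lower_bound {n : ℕ} (L : ℕ) (hL : 0 < L)
    (J : ℕ → Matrix (Fin n) (Fin n) ℝ) (M a : ℝ) (hM : 0 < M) (ha : 0 < a)
    (hnorm : ∀ ℓ < L, M ≤ opNorm (J ℓ))
    (halign : ∀ ℓ, ℓ + 1 < L → AlignGE (J (ℓ + 1)) (chainProd J (ℓ + 1)) a) :
    (a * M) ^ L / a ≤ opNorm (chainProd J L) := by
  have main : ∀ k, 1 ≤ k → k ≤ L → a^(k-1) * M^k ≤ opNorm (chainProd J k) := by
    intro k hk1
    induction k, hk1 using Nat.le_induction with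
    | base =>
      intro _
      have : chainProd J 1 = J 0 := by simp [chainProd]
      rw [this]
      simpa using hnorm 0 hL
    | succ k hk ih =>
      intro hkL
      have hkL' : k ≤ L := le_of_lt (Nat.lt_of_lt_of_le (Nat.lt_succ_self k) hkL)
      have ih' := ih hkL'
      obtain ⟨m, rfl⟩ : ∃ m, k = m + 1 := ⟨k - 1, (Nat.succ_pred_eq_of_pos hk).symm⟩
      have hal := halign m (by omega)
      have hstep := opNorm_mul_ge (J (m+1)) (chainProd J (m+1)) a ha.le hal
      have hchain : chainProd J (m + 1 + 1) = J (m+1) * chainProd J (m+1) := rfl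
      rw [hchain]
      refine le_trans ?_ hstep
      have hJ : M ≤ opNorm (J (m+1)) := hnorm (m+1) (by omega)
      have hC : a^m * M^(m+1) ≤ opNorm (chainProd J (m+1)) := by simpa using ih'
      have hCnn : (0:ℝ) ≤ a^m * M^(m+1) := by positivity
      calc a^(m+1) * M^(m+2) = a * (M * (a^m * M^(m+1))) := by ring
        _ ≤ a * (opNorm (J (m+1)) * opNorm (chainProd J (m+1))) := by
            apply mul_le_mul_of_nonneg_left _ ha.le
            exact mul_le_mul hJ hC hCnn (le_trans hM.le hJ)
  have h := main L hL le_rfl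
  have hL1 : L - 1 + 1 = L := Nat.succ_pred_eq_of_pos hL
  have heq : (a * M) ^ L / a = a^(L-1) * M^L := by
    rw [mul_pow, ← hL1, pow_succ]
    field_simp
    ring_nf
    simp
  rw [heq]
  exact h
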